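/- arXiv:1204.5393 — 2 statements merged into one kernel-verified Lean document; each statement's English description precedes it below -/
import Mathlib

section
/- Let t be a non-periodic linearly recurrent sequence with constant L, let u be a factor of t, and let l ∈ ℕ. Then the number of factors of t of length at most l that are concatenations of return words to u is at most (1 + 4L³)^(lL/|u|). -/
/-- The factor of the sequence `x` starting at position `i` of length `n`. -/
def seqWord {A : Type*} (x : ℕ → A) (i n : ℕ) : List A :=
  (List.range n).map (fun k => x (i + k))

/-- The word `u` occurs in the sequence `x` at position `i`. -/
def occursAt {A : Type*} (x : ℕ → A) (u : List A) (i : ℕ) : Prop :=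
  seqWord x i u.length = u

/-- `u` is a factor of the sequence `x`. -/
def IsFactor {A : Type*} (x : ℕ → A) (u : List A) : Prop :=
  ∃ i, occursAt x u i

/-- `u` is a prefix of the sequence `x`. -/
def IsPrefixSeq {A : Type*} (u : List A) (x : ℕ → A) : Prop :=
  occursAt x u 0

/-- `x` is uniformly recurrent: every factor occurs in every sufficiently long window. -/
def UnifRec {A : Type*} (x : ℕ → A) : Prop :=
  ∀ u : List A, IsFactor x u → ∃ C, ∀ i, ∃ j, i ≤ j ∧ j < i + C ∧ occursAt x u j

/-- `w` is a return word to `u` in `x`: the factor between two consecutive occurrences of `u`. -/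
def IsReturnWord {A : Type*} (x : ℕ → A) (u w : List A) : Prop :=
  ∃ i j, i < j ∧ occursAt x u i ∧ occursAt x u j ∧
    (∀ k, i < k → k < j → ¬ occursAt x u k) ∧ w = seqWord x i (j - i)

/-- Apply a morphism (given on letters) to a word, by concatenation. -/
def morphApply {I A : Type*} (θ : I → List A) (l : List I) : List A :=
  (l.map θ).flatten

/-- Iterate an endomorphism `σ` of the free monoid `n` times on a word. -/
def morphIter {A : Type*} (σ : A → List A) : ℕ → List A → List A
  | 0, l => l
  | n + 1, l => morphApply σ (morphIter σ n l)

/-- `x` is ultimately periodic. -/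
def UltPeriodic {A : Type*} (x : ℕ → A) : Prop :=
  ∃ p > 0, ∃ N, ∀ n ≥ N, x (n + p) = x n

/-- `x` is linearly recurrent with constant `K`: it is uniformly recurrent and two
successive occurrences of any nonempty factor `u` differ by at most `K * |u|`. -/
def LinRec {A : Type*} (K : ℕ) (x : ℕ → A) : Prop :=
  UnifRec x ∧ ∀ u : List A, u ≠ [] → IsFactor x u →
    ∀ i, occursAt x u i → ∃ j, i < j ∧ j ≤ i + K * u.length ∧ occursAt x u j

/-- `σ` is prolongable on the letter `a`. -/
def Prolongable {A : Type*} (σ : A → List A) (a : A) : Prop :=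
  (∃ t, σ a = a :: t ∧ t ≠ []) ∧
    Filter.Tendsto (fun n => (morphIter σ n [a]).length) Filter.atTop Filter.atTop

/-- `σ` is growing: the image of each letter has length tending to infinity. -/
def Growing {A : Type*} (σ : A → List A) : Prop :=
  ∀ a, Filter.Tendsto (fun n => (morphIter σ n [a]).length) Filter.atTop Filter.atTop

/-- `σ` is primitive: some power sends every letter to a word containing every letter. -/
def Primitive {A : Type*} (σ : A → List A) : Prop :=
  ∃ n > 0, ∀ a b : A, b ∈ morphIter σ n [a]

/-- `x` is the fixed point `σ^∞(a)` of `σ`, prolongable on `a`. -/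
def IsFixedPointOf {A : Type*} (σ : A → List A) (a : A) (x : ℕ → A) : Prop :=
  x 0 = a ∧ ∀ n, IsPrefixSeq (morphIter σ n [a]) x

/-- The word `w` belongs to the language of the endomorphism `σ`. -/
def InLang {A : Type*} (σ : A → List A) (w : List A) : Prop :=
  ∃ a n, w <:+: morphIter σ n [a]

/-- The word `u` occurs at position `i` in the word `w`. -/
def listOccursAt {A : Type*} (w u : List A) (i : ℕ) : Prop :=
  i + u.length ≤ w.length ∧ (w.drop i).take u.length = u

/-- `|σ^k|`: the maximal length of the image of a letter under `σ^k`. -/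
def maxLen {A : Type*} [Fintype A] [Nonempty A] (σ : A → List A) (k : ℕ) : ℕ :=
  Finset.univ.sup' Finset.univ_nonempty (fun a => (morphIter σ k [a]).length)

/-- `⟨σ^k⟩`: the minimal length of the image of a letter under `σ^k`. -/
def minLen {A : Type*} [Fintype A] [Nonempty A] (σ : A → List A) (k : ℕ) : ℕ :=
  Finset.univ.inf' Finset.univ_nonempty (fun a => (morphIter σ k [a]).length)

/-- `(R, θ, z)` is the derived-sequence data of `x` on the prefix `u`: `θ 0, …, θ (R-1)`
enumerate the return words to `u` in order of first appearance in `x`, `z` is the derived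
sequence, i.e. the coding of the decomposition of `x` into return words to `u`,
so that `Θ_{x,u}(z) = x`. -/
def IsDerivedSeq {A : Type*} (x : ℕ → A) (u : List A) (R : ℕ)
    (θ : ℕ → List A) (z : ℕ → ℕ) : Prop :=
  (∀ i < R, IsReturnWord x u (θ i)) ∧
  (∀ w, IsReturnWord x u w → ∃ i < R, θ i = w) ∧
  (∀ i < R, ∀ j < R, i < j →
      sInf {k | occursAt x (θ i) k} < sInf {k | occursAt x (θ j) k}) ∧
  (∀ k, z k < R) ∧
  (∀ n, IsPrefixSeq (morphApply θ (seqWord z 0 n)) x)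

@[simp] lemma seqWord_length {A : Type*} (x : ℕ → A) (i n : ℕ) :
    (seqWord x i n).length = n := by simp [seqWord]

lemma seqWord_getElem {A : Type*} (x : ℕ → A) (i n k : ℕ) (h : k < n) :
    (seqWord x i n)[k]'(by simpa using h) = x (i + k) := by
  simp [seqWord]

lemma occursAt_iff {A : Type*} (x : ℕ → A) (u : List A) (i : ℕ) :
    occursAt x u i ↔ ∀ k, (h : k < u.length) → x (i + k) = u[k] := by
  constructor
  · intro h k hk
    have hk' : k < (seqWord x i u.length).length := by simpa using hk
    rw [← List.getElem_of_eq h hk', seqWord_getElem _ _ _ _ hk]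
  · intro h
    apply List.ext_getElem (by simp)
    intro k h1 h2
    rw [seqWord_getElem _ _ _ _ (by simpa using h1)]
    exact h k h2

lemma occursAt_seqWord {A : Type*} (x : ℕ → A) (i n : ℕ) :
    occursAt x (seqWord x i n) i := by
  unfold occursAt
  rw [seqWord_length]

lemma seqWord_append {A : Type*} (x : ℕ → A) (i m n : ℕ) :
    seqWord x i (m + n) = seqWord x i m ++ seqWord x (i + m) n := by
  apply List.ext_getElem (by simp)
  intro k h1 h2
  rw [seqWord_getElem _ _ _ _ (by simpa using h1)]
  rcases lt_or_ge k m with h | h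
  · rw [List.getElem_append_left (by simpa using h), seqWord_getElem _ _ _ _ h]
  · rw [List.getElem_append_right (by simpa using h)]
    have h3 : k - (seqWord x i m).length < n := by simp at h1 ⊢; omega
    rw [seqWord_getElem _ _ _ _ h3]
    congr 1; simp; omega

lemma rot_eq {A : Type*} (s : ℕ) (hs : 1 ≤ s) (Ψ : ZMod s → A)
    (hprim : ∀ d : ZMod s, d ≠ 0 → ∃ j, Ψ (j + d) ≠ Ψ j)
    (a b : ZMod s) (h : ∀ k : ℕ, k < s - 1 → Ψ (a + (k : ZMod s)) = Ψ (b + (k : ZMod s))) :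
    a = b := by
  haveI : NeZero s := ⟨by omega⟩
  by_contra hab
  set d := a - b with hd
  have hd0 : d ≠ 0 := sub_ne_zero.mpr hab
  set x₀ := b + ((s - 1 : ℕ) : ZMod s) with hx₀
  have rule : ∀ x : ZMod s, x ≠ x₀ → Ψ (x + d) = Ψ x := by
    intro x hx
    have hke : b + ((x - b).val : ZMod s) = x := by
      rw [ZMod.natCast_val, ZMod.cast_id]; ring
    have hklt : (x - b).val < s - 1 := by
      have hk : (x - b).val < s := ZMod.val_lt _
      rcases lt_or_ge (x - b).val (s - 1) with h' | h'
      · exact h'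
      · exfalso
        apply hx
        have hev : (x - b).val = s - 1 := by omega
        rw [← hke, hev]
    have hh := h (x - b).val hklt
    rw [← hke, show b + ((x - b).val : ZMod s) + d = a + ((x - b).val : ZMod s) by
      rw [hd]; ring]
    exact hh
  have hordpos : 0 < addOrderOf d := addOrderOf_pos d
  have hcyc : ∀ m : ℕ, 1 ≤ m → m ≤ addOrderOf d → Ψ (x₀ + m • d) = Ψ (x₀ + d) := by
    intro m h1
    induction m with
    | zero => omega
    | succ m ih =>
      intro hle
      rcases Nat.eq_zero_or_pos m with hm0 | hm1
      · subst hm0; simp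
      · have hne : x₀ + m • d ≠ x₀ := by
          intro hcontra
          have : m • d = 0 := by
            have h' := hcontra
            rw [add_eq_left] at h'
            exact h'
          have hdvd : addOrderOf d ∣ m := addOrderOf_dvd_of_nsmul_eq_zero this
          have := Nat.le_of_dvd hm1 hdvd
          omega
        have step : Ψ (x₀ + m • d + d) = Ψ (x₀ + m • d) := rule _ hne
        have : x₀ + (m + 1) • d = x₀ + m • d + d := by
          rw [add_nsmul, one_nsmul]; ring
        rw [this, step]
        exact ih hm1 (by omega)
  have hx0 : Ψ (x₀ + d) = Ψ x₀ := by
    have := hcyc (addOrderOf d) hordpos le_rfl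
    rw [addOrderOf_nsmul_eq_zero d, add_zero] at this
    exact this.symm
  have all : ∀ x : ZMod s, Ψ (x + d) = Ψ x := by
    intro x
    by_cases hx : x = x₀
    · rw [hx]; exact hx0
    · exact rule x hx
  obtain ⟨j, hj⟩ := hprim d hd0
  exact hj (all j)

lemma chase {A : Type*} (t : ℕ → A) (L : ℕ) (hL : 1 ≤ L) (hlr : LinRec L t)
    (v : List A) (hv : v ≠ []) (n : ℕ) (hn : occursAt t v n) :
    ∀ c, n ≤ c → ∃ m, c ≤ m ∧ m < c + L * v.length ∧ occursAt t v m := by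
  have hvl : 1 ≤ v.length := List.length_pos_iff.mpr hv
  intro c hc
  induction c, hc using Nat.le_induction with
  | base => exact ⟨n, le_rfl, by nlinarith, hn⟩
  | succ c hc ih =>
    obtain ⟨m, hm1, hm2, hmv⟩ := ih
    rcases Nat.lt_or_ge m (c + 1) with hlt | hge
    · have hm : m = c := by omega
      obtain ⟨j, hj1, hj2, hj3⟩ := hlr.2 v hv ⟨n, hn⟩ m hmv
      exact ⟨j, by omega, by omega, hj3⟩
    · exact ⟨m, hge, by omega, hmv⟩

lemma gap_lemma {A : Type*} (t : ℕ → A) (L : ℕ) (hL : 1 ≤ L) (hlr : LinRec L t)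
    (u : List A) (hu : u ≠ []) (i p : ℕ) (hp : 0 < p)
    (h1 : occursAt t u i) (h2 : occursAt t u (i + p))
    (hlt : L * p < u.length) : UltPeriodic t := by
  classical
  set M := u.length + p with hM
  have hPp : 1 ≤ p ∧ ∀ y, y + p < M → t (i + y + p) = t (i + y) := by
    refine ⟨hp, ?_⟩
    intro y hy
    have hy' : y < u.length := by omega
    have e1 := (occursAt_iff t u i).1 h1 y hy'
    have e2 := (occursAt_iff t u (i + p)).1 h2 y hy'
    rw [show i + y + p = i + p + y by ring, e2, ← e1]
  have hex : ∃ d, 1 ≤ d ∧ ∀ y, y + d < M → t (i + y + d) = t (i + y) := ⟨p, hPp⟩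
  set s := Nat.find hex with hsdef
  obtain ⟨hs1, hQ⟩ : 1 ≤ s ∧ ∀ y, y + s < M → t (i + y + s) = t (i + y) := Nat.find_spec hex
  have hsp : s ≤ p := Nat.find_le hPp
  haveI : NeZero s := ⟨by omega⟩
  set Ψ : ZMod s → A := fun j => t (i + j.val) with hΨ
  have herd : ∀ y, y < M → t (i + y) = Ψ ((y : ℕ) : ZMod s) := by
    intro y
    induction y using Nat.strong_induction_on with
    | _ y ih =>
      intro hy
      rcases lt_or_ge y s with h | h
      · simp only [hΨ, ZMod.val_natCast, Nat.mod_eq_of_lt h]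
      · have h5 : (y - s) + s < M := by omega
        have hq := hQ (y - s) h5
        rw [show i + (y - s) + s = i + y by omega] at hq
        rw [hq, ih (y - s) (by omega) (by omega)]
        congr 1
        have hys : ((y - s) + s : ℕ) = y := by omega
        conv_rhs => rw [← hys]
        push_cast [ZMod.natCast_self]
        ring
  have hprim : ∀ d : ZMod s, d ≠ 0 → ∃ j, Ψ (j + d) ≠ Ψ j := by
    intro d hd
    by_contra hcon
    push_neg at hcon
    have hdlt : d.val < s := ZMod.val_lt d
    have hval : 1 ≤ d.val := by
      rcases Nat.eq_zero_or_pos d.val with h | h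
      · exact absurd ((ZMod.val_eq_zero d).1 h) hd
      · exact h
    have : ¬ (1 ≤ d.val ∧ ∀ y, y + d.val < M → t (i + y + d.val) = t (i + y)) :=
      Nat.find_min hex hdlt
    apply this
    refine ⟨hval, ?_⟩
    intro y hy
    rw [show i + y + d.val = i + (y + d.val) by ring]
    rw [herd _ (by omega), herd _ (by omega)]
    push_cast
    rw [ZMod.natCast_val, ZMod.cast_id]
    exact hcon _
  -- window classification
  have hwin : ∀ n, ∃ φ : ZMod s, ∀ k, k < s → t (n + k) = Ψ (φ + (k : ZMod s)) := by
    intro n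
    set v := seqWord t n s with hv
    have hvlen : v.length = s := seqWord_length t n s
    have hvne : v ≠ [] := by
      intro h; rw [h] at hvlen; simp at hvlen; omega
    have hocc : occursAt t v n := occursAt_seqWord t n s
    obtain ⟨C, hC⟩ := hlr.1 (seqWord t i M) ⟨i, occursAt_seqWord t i M⟩
    obtain ⟨c, hc1, _, hcI⟩ := hC n
    obtain ⟨m, hm1, hm2, hmv⟩ := chase t L hL hlr v hvne n hocc c hc1
    have hLs : L * s ≤ L * p := Nat.mul_le_mul_left L hsp
    have hms : m + s ≤ c + M := by rw [hvlen] at hm2; omega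
    have hcopy : ∀ y, y < M → t (c + y) = Ψ ((y : ℕ) : ZMod s) := by
      intro y hy
      have hg := (occursAt_iff t (seqWord t i M) c).1 hcI y (by simpa using hy)
      rw [seqWord_getElem t i M y hy] at hg
      rw [hg]
      exact herd y hy
    refine ⟨((m - c : ℕ) : ZMod s), ?_⟩
    intro k hk
    have e0 := (occursAt_iff t v n).1 hocc k (by rw [hvlen]; exact hk)
    have e1 := (occursAt_iff t v m).1 hmv k (by rw [hvlen]; exact hk)
    rw [e0, ← e1]
    rw [show m + k = c + ((m - c) + k) by omega]
    rw [hcopy _ (by omega)]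
    push_cast
    ring_nf
  choose φ hφ using hwin
  have hinc : ∀ n, φ (n + 1) = φ n + 1 := by
    intro n
    apply rot_eq s hs1 Ψ hprim
    intro k hk
    have e1 := hφ (n + 1) k (by omega)
    have e2 := hφ n (k + 1) (by omega)
    rw [show n + 1 + k = n + (k + 1) by ring] at e1
    rw [← e1, e2]
    push_cast
    ring_nf
  have hlin : ∀ n : ℕ, φ n = φ 0 + (n : ZMod s) := by
    intro n
    induction n with
    | zero => simp
    | succ n ih => rw [hinc n, ih]; push_cast; ring
  refine ⟨s, by omega, 0, ?_⟩
  intro n _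
  have en : t n = Ψ (φ n) := by
    have := hφ n 0 (by omega)
    simpa using this
  have ens : t (n + s) = Ψ (φ (n + s)) := by
    have := hφ (n + s) 0 (by omega)
    simpa using this
  rw [en, ens, hlin n, hlin (n + s)]
  congr 1
  push_cast [ZMod.natCast_self]
  ring

def RetAt {A : Type*} (t : ℕ → A) (u : List A) (m : ℕ) (w : List A) : Prop :=
  occursAt t u m ∧ occursAt t u (m + w.length) ∧
  (∀ δ, 0 < δ → δ < w.length → ¬ occursAt t u (m + δ)) ∧
  w = seqWord t m w.length ∧ w ≠ []

lemma retAt_unique {A : Type*} {t : ℕ → A} {u : List A} {m : ℕ} {w w' : List A}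
    (h : RetAt t u m w) (h' : RetAt t u m w') : w = w' := by
  obtain ⟨hu1, hu2, hb, he, hne⟩ := h
  obtain ⟨hu1', hu2', hb', he', hne'⟩ := h'
  have hlen : w.length = w'.length := by
    rcases Nat.lt_trichotomy w.length w'.length with h | h | h
    · exact absurd hu2 (hb' w.length (List.length_pos_iff.mpr hne) h)
    · exact h
    · exact absurd hu2' (hb w'.length (List.length_pos_iff.mpr hne') h)
  rw [he, he', hlen]

lemma ret_exists {A : Type*} {t : ℕ → A} {u w : List A}
    (h : IsReturnWord t u w) : ∃ m, RetAt t u m w := by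
  obtain ⟨i, j, hij, hui, huj, hbet, hw⟩ := h
  have hlen : w.length = j - i := by rw [hw, seqWord_length]
  refine ⟨i, hui, ?_, ?_, ?_, ?_⟩
  · rw [hlen, show i + (j - i) = j by omega]; exact huj
  · intro δ h0 hδ
    rw [hlen] at hδ
    exact hbet (i + δ) (by omega) (by omega)
  · rw [hlen]; exact hw
  · intro hnil; rw [hnil] at hlen; simp at hlen; omega

lemma retAt_isReturnWord {A : Type*} {t : ℕ → A} {u w : List A} {m : ℕ}
    (h : RetAt t u m w) : IsReturnWord t u w := by
  obtain ⟨hu1, hu2, hb, he, hne⟩ := h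
  have hpos : 0 < w.length := List.length_pos_iff.mpr hne
  refine ⟨m, m + w.length, by omega, hu1, hu2, ?_, ?_⟩
  · intro k hk1 hk2
    have := hb (k - m) (by omega) (by omega)
    rw [show m + (k - m) = k by omega] at this
    exact this
  · rw [show m + w.length - m = w.length by omega]; exact he

lemma retAt_vocc {A : Type*} {t : ℕ → A} {u w : List A} {m : ℕ}
    (h : RetAt t u m w) : occursAt t (w ++ u) m := by
  obtain ⟨hu1, hu2, hb, he, hne⟩ := h
  unfold occursAt
  rw [List.length_append, seqWord_append, ← he]
  exact congrArg (fun l => w ++ l) hu2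

lemma retAt_transfer {A : Type*} {t : ℕ → A} {u w : List A} {m m' : ℕ}
    (h : RetAt t u m w) (hocc : occursAt t (w ++ u) m') : RetAt t u m' w := by
  have hvm := retAt_vocc h
  obtain ⟨hu1, hu2, hb, he, hne⟩ := h
  have hcp : ∀ y, y < w.length + u.length → t (m' + y) = t (m + y) := by
    intro y hy
    have e1 := (occursAt_iff t (w ++ u) m').1 hocc y (by simpa using hy)
    have e2 := (occursAt_iff t (w ++ u) m).1 hvm y (by simpa using hy)
    rw [e1, e2]
  have hul : ∀ k, k < u.length → k < w.length + u.length := by intro k hk; omega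
  refine ⟨?_, ?_, ?_, ?_, hne⟩
  · rw [occursAt_iff]
    intro k hk
    rw [hcp k (hul k hk)]
    exact (occursAt_iff t u m).1 hu1 k hk
  · rw [occursAt_iff]
    intro k hk
    rw [show m' + w.length + k = m' + (w.length + k) by ring, hcp _ (by omega),
      show m + (w.length + k) = m + w.length + k by ring]
    exact (occursAt_iff t u (m + w.length)).1 hu2 k hk
  · intro δ h0 hδ hocc'
    apply hb δ h0 hδ
    rw [occursAt_iff]
    intro k hk
    rw [show m + δ + k = m + (δ + k) by ring, ← hcp _ (by omega),
      show m' + (δ + k) = m' + δ + k by ring]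
    exact (occursAt_iff t u (m' + δ)).1 hocc' k hk
  · apply List.ext_getElem (by simp)
    intro y h1 h2
    rw [List.getElem_of_eq he h1, seqWord_getElem t m w.length y h1,
      seqWord_getElem t m' w.length y h1, hcp y (by omega)]


lemma sum_bound {A : Type*} (L c : ℕ) (P : List A → Prop)
    (hP : ∀ p, P p → c ≤ L * p.length) :
    ∀ parts : List (List A), (∀ p ∈ parts, P p) →
      parts.length * c ≤ L * (parts.map List.length).sum := by
  intro parts
  induction parts with
  | nil => simp
  | cons hd tl ih =>
    intro h
    simp only [List.map_cons, List.sum_cons, List.length_cons]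
    have h1 := hP hd (h hd (by simp))
    have h2 := ih (fun p hp => h p (List.mem_cons_of_mem _ hp))
    have e1 : (tl.length + 1) * c = tl.length * c + c := by ring
    have e2 : L * (hd.length + (tl.map List.length).sum)
        = L * hd.length + L * (tl.map List.length).sum := by ring
    omega


/-- Lemma (Durand 2011): let `t` be a non-periodic linearly recurrent sequence with
constant `L`, `u` a (non-empty) factor of `t` and `l ∈ ℕ`. Then the number of factors of
`t` of length at most `l` that are concatenations of return words to `u` is at most
`(1 + 4L³)^(lL/|u|)`. -/
theorem concat_returnWords_count_bound {A : Type*} [Fintype A] (t : ℕ → A)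
    (L : ℕ) (hlr : LinRec L t) (hnp : ¬ UltPeriodic t)
    (u : List A) (hu : u ≠ []) (huf : IsFactor t u) (l : ℕ) :
    ({w : List A | IsFactor t w ∧ w.length ≤ l ∧
        ∃ parts : List (List A),
          (∀ p ∈ parts, IsReturnWord t u p) ∧ parts.flatten = w}.ncard : ℝ) ≤
      (1 + 4 * (L : ℝ) ^ 3) ^ (((l : ℝ) * L) / (u.length : ℝ)) := by
  classical
  obtain ⟨i0, hi0⟩ := huf
  have hL : 1 ≤ L := by
    by_contra h
    have hL0 : L = 0 := by omega
    obtain ⟨j, hj1, hj2, _⟩ := hlr.2 u hu ⟨i0, hi0⟩ i0 hi0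
    rw [hL0] at hj2
    simp at hj2
    omega
  have hul : 1 ≤ u.length := List.length_pos_iff.mpr hu
  have gapcor : ∀ m m', m < m' → occursAt t u m → occursAt t u m' →
      u.length ≤ L * (m' - m) := by
    intro m m' hmm h1 h2
    by_contra h
    push_neg at h
    apply hnp
    apply gap_lemma t L hL hlr u hu m (m' - m) (by omega) h1 ?_ h
    rw [show m + (m' - m) = m' by omega]
    exact h2
  have retlow : ∀ w, IsReturnWord t u w → u.length ≤ L * w.length := by
    intro w hw
    obtain ⟨m, hm⟩ := ret_exists hw
    have hpos : 0 < w.length := List.length_pos_iff.mpr hm.2.2.2.2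
    have := gapcor m (m + w.length) (by omega) hm.1 hm.2.1
    simpa using this
  have retup : ∀ w, IsReturnWord t u w → w.length ≤ L * u.length := by
    intro w hw
    obtain ⟨i, j, hij, hui, huj, hbet, hwe⟩ := hw
    obtain ⟨j', hj1, hj2, hj3⟩ := hlr.2 u hu ⟨i0, hi0⟩ i hui
    have hjj : j ≤ j' := by
      by_contra hh
      exact hbet j' hj1 (by omega) hj3
    rw [hwe, seqWord_length]
    omega
  have hfin : {w : List A | IsReturnWord t u w}.Finite :=
    Set.Finite.subset (List.finite_length_le A (L * u.length)) (fun w hw => retup w hw)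
  set RS : Finset (List A) := hfin.toFinset with hRS
  have hmemRS : ∀ w, w ∈ RS ↔ IsReturnWord t u w := by
    intro w
    rw [hRS, Set.Finite.mem_toFinset]
    rfl
  -- choose base occurrences
  have hchoice : ∀ w ∈ RS, ∃ m, RetAt t u m w := fun w hw => ret_exists ((hmemRS w).1 hw)
  set m0 : (w : List A) → w ∈ RS → ℕ := fun w hw => (hchoice w hw).choose with hm0def
  have hm0spec : ∀ w hw, RetAt t u (m0 w hw) w := fun w hw => (hchoice w hw).choose_spec
  set N := RS.attach.sup (fun w => m0 w.1 w.2) with hNdef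
  set q := (u.length + (L - 1)) / L with hqdef
  have hqchar : ∀ d, q ≤ d ↔ u.length ≤ L * d := by
    intro d
    rw [hqdef, Nat.div_le_iff_le_mul_add_pred (by omega)]
    omega
  have hqu : u.length ≤ L * q := (hqchar q).1 le_rfl
  have hq1 : 1 ≤ q := by
    by_contra h
    have : q ≤ 0 := by omega
    have := (hqchar 0).1 this
    omega
  set D := L * (L * u.length + u.length) with hDdef
  have hD1 : 1 ≤ D := by
    have h1 : 0 < L * u.length := Nat.mul_pos (by omega) (by omega)
    rw [hDdef]
    nlinarith
  set B := D / q + 1 with hBdef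
  have hmex : ∀ w ∈ RS, ∃ m, N ≤ m ∧ m < N + D ∧ RetAt t u m w := by
    intro w hw
    have hret := hm0spec w hw
    have hwret : IsReturnWord t u w := (hmemRS w).1 hw
    have hvocc := retAt_vocc hret
    have hvne : w ++ u ≠ [] := by simp [hu]
    have hNle : m0 w hw ≤ N := Finset.le_sup (f := fun w => m0 w.1 w.2)
      (Finset.mem_attach RS ⟨w, hw⟩)
    obtain ⟨m, hm1, hm2, hm3⟩ := chase t L hL hlr (w ++ u) hvne _ hvocc N hNle
    refine ⟨m, hm1, ?_, retAt_transfer hret hm3⟩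
    have hlen : (w ++ u).length ≤ L * u.length + u.length := by
      rw [List.length_append]
      have := retup w hwret
      omega
    have hDle : L * (w ++ u).length ≤ D := by
      rw [hDdef]
      exact Nat.mul_le_mul_left L hlen
    omega
  set mOf : (w : List A) → w ∈ RS → ℕ := fun w hw => (hmex w hw).choose with hmOfdef
  have hmOf : ∀ w hw, N ≤ mOf w hw ∧ mOf w hw < N + D ∧ RetAt t u (mOf w hw) w :=
    fun w hw => (hmex w hw).choose_spec
  have hcard : RS.card ≤ B := by
    rw [← Finset.card_attach]
    have := Finset.card_le_card_of_injOn (f := fun w : {x // x ∈ RS} => (mOf w.1 w.2 - N) / q)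
      (s := RS.attach) (t := Finset.range B) ?mem ?inj
    · simpa using this
    case mem =>
      intro w _
      simp only [Finset.coe_range, Set.mem_Iio, Finset.mem_coe, Finset.mem_range]
      obtain ⟨ha, hb, _⟩ := hmOf w.1 w.2
      have h1 : mOf w.1 w.2 - N ≤ D - 1 := by omega
      have h2 : (mOf w.1 w.2 - N) / q ≤ (D - 1) / q := Nat.div_le_div_right h1
      have h3 : (D - 1) / q ≤ D / q := Nat.div_le_div_right (by omega)
      omega
    case inj =>
      intro w hw w' hw' heq
      by_contra hne
      have hww : w.1 ≠ w'.1 := fun h => hne (Subtype.ext h)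
      have hmne : mOf w.1 w.2 ≠ mOf w'.1 w'.2 := by
        intro h
        apply hww
        exact retAt_unique (hmOf w.1 w.2).2.2 (h ▸ (hmOf w'.1 w'.2).2.2)
      simp only at heq
      have key : ∀ (a b : List A) (ha : a ∈ RS) (hb : b ∈ RS),
          mOf a ha < mOf b hb →
          (mOf a ha - N) / q = (mOf b hb - N) / q → False := by
        intro a b ha hb hlt hdeq
        have hg := gapcor (mOf a ha) (mOf b hb) hlt (hmOf a ha).2.2.1 (hmOf b hb).2.2.1
        have hqd : q ≤ mOf b hb - mOf a ha := (hqchar _).2 hg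
        have hNa : N ≤ mOf a ha := (hmOf a ha).1
        have step : (mOf a ha - N) / q + 1 ≤ (mOf b hb - N) / q := by
          calc (mOf a ha - N) / q + 1 = (mOf a ha - N + q) / q := by
                rw [Nat.add_div_right _ (by omega)]
          _ ≤ (mOf b hb - N) / q := Nat.div_le_div_right (by omega)
        omega
      rcases Nat.lt_or_ge (mOf w.1 w.2) (mOf w'.1 w'.2) with hlt | hge
      · exact key w.1 w'.1 w.2 w'.2 hlt heq
      · exact key w'.1 w.1 w'.2 w.2 (by omega) heq.symm
  have hB4 : B ≤ 4 * L ^ 3 := by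
    have hDq : D / q ≤ L * (L + 1) * L := by
      have hDle : D ≤ q * (L * (L + 1) * L) := by
        have h1 : L * u.length + u.length = (L + 1) * u.length := by ring
        have h2 : (L + 1) * u.length ≤ (L + 1) * (L * q) := Nat.mul_le_mul_left _ hqu
        calc D = L * ((L + 1) * u.length) := by rw [hDdef, h1]
        _ ≤ L * ((L + 1) * (L * q)) := Nat.mul_le_mul_left _ h2
        _ = q * (L * (L + 1) * L) := by ring
      rw [Nat.div_le_iff_le_mul_add_pred (by omega)]
      calc D ≤ q * (L * (L + 1) * L) := hDle
      _ ≤ q * (L * (L + 1) * L) + (q - 1) := by omega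
    have : L * (L + 1) * L + 1 ≤ 4 * L ^ 3 := by nlinarith
    omega
  -- decomposition
  set Kx := (L * l) / u.length with hKxdef
  set S := {w : List A | IsFactor t w ∧ w.length ≤ l ∧
      ∃ parts : List (List A),
        (∀ p ∈ parts, IsReturnWord t u p) ∧ parts.flatten = w} with hSdef
  have hdecomp : ∀ w ∈ S, ∃ parts : List (List A),
      parts.length ≤ Kx ∧ (∀ p ∈ parts, p ∈ RS) ∧ parts.flatten = w := by
    intro w hw
    obtain ⟨_, hlen, parts, hparts, hflat⟩ := hw
    refine ⟨parts, ?_, fun p hp => (hmemRS p).2 (hparts p hp), hflat⟩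
    have hsum := sum_bound L u.length (IsReturnWord t u) retlow parts hparts
    have hfl : (parts.map List.length).sum = w.length := by
      rw [← hflat]
      simp
    rw [hfl] at hsum
    rw [hKxdef]
    rw [Nat.le_div_iff_mul_le (by omega)]
    calc parts.length * u.length ≤ L * w.length := hsum
    _ ≤ L * l := Nat.mul_le_mul_left L hlen
  choose pts hpts1 hpts2 hpts3 using hdecomp
  set e := RS.equivFin with hedef
  set enc : (w : List A) → w ∈ S → (Fin Kx → Fin (RS.card + 1)) := fun w hw idx =>
    if h : idx.val < (pts w hw).length then
      (e ⟨(pts w hw)[idx.val], hpts2 w hw _ (List.getElem_mem h)⟩).castSucc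
    else Fin.last RS.card with hencdef
  have hSle : S.ncard ≤ (RS.card + 1) ^ Kx := by
    have hinj : Function.Injective (fun w : S => enc w.1 w.2) := by
      intro w w' heq
      simp only at heq
      have hlenkey : ∀ (a b : List A) (ha : a ∈ S) (hb : b ∈ S), enc a ha = enc b hb →
          (pts a ha).length < (pts b hb).length → False := by
        intro a b ha hb he2 hlt
        have hKb : (pts a ha).length < Kx := lt_of_lt_of_le hlt (hpts1 b hb)
        have := congrFun he2 ⟨(pts a ha).length, hKb⟩
        rw [hencdef] at this
        simp only [dif_neg (lt_irrefl _), dif_pos hlt] at this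
        exact absurd this.symm (ne_of_lt (Fin.castSucc_lt_last _))
      have hlen : (pts w.1 w.2).length = (pts w'.1 w'.2).length := by
        rcases Nat.lt_trichotomy (pts w.1 w.2).length (pts w'.1 w'.2).length with h | h | h
        · exact absurd (hlenkey w.1 w'.1 w.2 w'.2 heq h) (fun x => x)
        · exact h
        · exact absurd (hlenkey w'.1 w.1 w'.2 w.2 heq.symm h) (fun x => x)
      have hpeq : pts w.1 w.2 = pts w'.1 w'.2 := by
        apply List.ext_getElem hlen
        intro idx h1 h2
        have hKb : idx < Kx := lt_of_lt_of_le h1 (hpts1 w.1 w.2)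
        have := congrFun heq ⟨idx, hKb⟩
        rw [hencdef] at this
        simp only [dif_pos h1, dif_pos h2] at this
        have := Fin.castSucc_injective _ this
        have := e.injective this
        exact congrArg Subtype.val this
      apply Subtype.ext
      rw [← hpts3 w.1 w.2, ← hpts3 w'.1 w'.2, hpeq]
    calc S.ncard = Nat.card S := (Nat.card_coe_set_eq S).symm
    _ ≤ Nat.card (Fin Kx → Fin (RS.card + 1)) := Nat.card_le_card_of_injective _ hinj
    _ = (RS.card + 1) ^ Kx := by
        rw [Nat.card_fun]
        simp
  -- numeric conclusion
  have hRS4 : RS.card ≤ 4 * L ^ 3 := le_trans hcard hB4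
  have hKx : ((Kx : ℕ) : ℝ) ≤ (l : ℝ) * L / (u.length : ℝ) := by
    have h1 : ((L * l / u.length : ℕ) : ℝ) ≤ ((L * l : ℕ) : ℝ) / ((u.length : ℕ) : ℝ) :=
      Nat.cast_div_le
    rw [hKxdef]
    calc ((L * l / u.length : ℕ) : ℝ) ≤ ((L * l : ℕ) : ℝ) / ((u.length : ℕ) : ℝ) := h1
    _ = (l : ℝ) * L / (u.length : ℝ) := by push_cast; ring
  have hbase : ((RS.card + 1 : ℕ) : ℝ) ≤ 1 + 4 * (L : ℝ) ^ 3 := by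
    have : (RS.card : ℝ) ≤ 4 * (L : ℝ) ^ 3 := by exact_mod_cast hRS4
    push_cast
    linarith
  have hbase1 : (1 : ℝ) ≤ 1 + 4 * (L : ℝ) ^ 3 := by
    have : (0:ℝ) ≤ 4 * (L : ℝ) ^ 3 := by positivity
    linarith
  calc (S.ncard : ℝ) ≤ (((RS.card + 1) ^ Kx : ℕ) : ℝ) := by exact_mod_cast hSle
  _ = ((RS.card + 1 : ℕ) : ℝ) ^ Kx := by push_cast; ring
  _ ≤ (1 + 4 * (L : ℝ) ^ 3) ^ Kx := pow_le_pow_left₀ (Nat.cast_nonneg _) hbase Kx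
  _ = (1 + 4 * (L : ℝ) ^ 3) ^ ((Kx : ℕ) : ℝ) := (Real.rpow_natCast _ _).symm
  _ ≤ (1 + 4 * (L : ℝ) ^ 3) ^ ((l : ℝ) * L / (u.length : ℝ)) :=
      Real.rpow_le_rpow_of_exponent_le hbase1 hKx
end

section
/- Let σ : A* → A* be a substitution prolongable on a, φ : A* → B* a coding, y = σ^∞(a), and suppose x = φ(y) is uniformly recurrent and non-periodic with all letters of A occurring in y. Then there is a uniform bound, independent of u, on the number of factors v of y with φ(v) = u, for every factor u of x; explicitly the bound p_σ(K+1)·|σ|·Q_σ·(K+1)² works, where K is a linear recurrence constant of x, p_σ(n) is the number of length-n words in the language of σ, and Q_σ satisfies |σ^k| ≤ Q_σ⟨σ^k⟩ for all k. -/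
section PartA
variable {A B : Type*}

@[simp] theorem bp_seqWord_length (x : ℕ → A) (i n : ℕ) : (seqWord x i n).length = n := by
  simp [seqWord]

theorem bp_seqWord_getElem (x : ℕ → A) (i n k : ℕ) (h : k < (seqWord x i n).length) :
    (seqWord x i n)[k] = x (i + k) := by
  simp [seqWord]

@[simp] theorem bp_seqWord_zero (x : ℕ → A) (i : ℕ) : seqWord x i 0 = [] := by simp [seqWord]

theorem bp_seqWord_one (x : ℕ → A) (i : ℕ) : seqWord x i 1 = [x i] := by
  show List.map (fun k => x (i + k)) (List.range 1) = [x i]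
  rw [List.range_succ]
  simp

theorem bp_seqWord_add (x : ℕ → A) (i m l : ℕ) :
    seqWord x i (m + l) = seqWord x i m ++ seqWord x (i + m) l := by
  simp only [seqWord, List.range_add, List.map_append, List.map_map]
  congr 1
  apply List.map_congr_left
  intro k _
  simp only [Function.comp]
  congr 1
  omega

theorem bp_seqWord_take (x : ℕ → A) (i n m : ℕ) :
    (seqWord x i n).take m = seqWord x i (min m n) := by
  simp [seqWord, ← List.map_take, List.take_range]

theorem bp_seqWord_drop (x : ℕ → A) (i n m : ℕ) :
    (seqWord x i n).drop m = seqWord x (i + m) (n - m) := by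
  rcases le_or_gt m n with h | h
  · have h1 : seqWord x i n = seqWord x i m ++ seqWord x (i + m) (n - m) := by
      have := bp_seqWord_add x i m (n - m)
      rwa [Nat.add_sub_cancel' h] at this
    have h2 : (seqWord x i m).length = m := by simp
    conv_lhs => rw [h1]
    exact List.drop_left' h2
  · have h1 : n - m = 0 := by omega
    rw [h1, bp_seqWord_zero]
    apply List.drop_eq_nil_of_le
    simp; omega

theorem bp_seqWord_congr {x z : ℕ → A} {i j n : ℕ} (h : ∀ k < n, x (i + k) = z (j + k)) :
    seqWord x i n = seqWord z j n := by
  apply List.ext_getElem (by simp)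
  intro k h1 h2
  rw [bp_seqWord_getElem, bp_seqWord_getElem]
  exact h k (by simpa using h1)

theorem bp_seqWord_apply_eq {x z : ℕ → A} {i j n : ℕ}
    (h : seqWord x i n = seqWord z j n) (k : ℕ) (hk : k < n) : x (i + k) = z (j + k) := by
  have h1 : k < (seqWord x i n).length := by simpa using hk
  have h2 : k < (seqWord z j n).length := by simpa using hk
  have := bp_seqWord_getElem x i n k h1
  rw [← this, ← bp_seqWord_getElem z j n k h2]
  exact List.getElem_of_eq h h1

theorem bp_occursAt_seqWord (x : ℕ → A) (i n : ℕ) : occursAt x (seqWord x i n) i := by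
  unfold occursAt
  rw [bp_seqWord_length]

theorem bp_occursAt_append {x : ℕ → A} {w₁ w₂ : List A} {i : ℕ}
    (h : occursAt x (w₁ ++ w₂) i) : occursAt x w₁ i ∧ occursAt x w₂ (i + w₁.length) := by
  unfold occursAt at *
  rw [List.length_append, bp_seqWord_add] at h
  have h1 := List.append_inj h (by rw [bp_seqWord_length])
  exact h1

theorem bp_occursAt_take {x : ℕ → A} {w : List A} {i : ℕ} (h : occursAt x w i)
    (m : ℕ) (hm : m ≤ w.length) : occursAt x (w.take m) i := by
  unfold occursAt at *
  have h2 : (w.take m).length = m := by simp [hm]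
  rw [h2]
  conv_rhs => rw [← h]
  rw [bp_seqWord_take]
  congr 1
  omega

theorem bp_occursAt_sub {x : ℕ → A} {W : List A} {p : ℕ} (h : occursAt x W p)
    (o n : ℕ) (hn : o + n ≤ W.length) : occursAt x ((W.drop o).take n) (p + o) := by
  unfold occursAt at *
  have hlen : ((W.drop o).take n).length = n := by
    rw [List.length_take, List.length_drop]
    omega
  rw [hlen]
  conv_rhs => rw [show W = seqWord x p W.length from h.symm]
  rw [bp_seqWord_drop, bp_seqWord_take]
  congr 1
  omega

theorem bp_occursAt_map {y : ℕ → A} {v : List A} {i : ℕ} (h : occursAt y v i) (φ : A → B) :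
    occursAt (fun t => φ (y t)) (v.map φ) i := by
  unfold occursAt at *
  rw [List.length_map]
  rw [← h]
  simp [seqWord, List.map_map]

end PartA

section PartB
variable {A : Type*} (σ : A → List A)

@[simp] theorem bp_morphApply_nil (θ : A → List A) : morphApply θ ([] : List A) = [] := rfl

theorem bp_morphApply_cons (θ : A → List A) (b : A) (l : List A) :
    morphApply θ (b :: l) = θ b ++ morphApply θ l := by simp [morphApply]

theorem bp_morphApply_append (θ : A → List A) (l₁ l₂ : List A) :
    morphApply θ (l₁ ++ l₂) = morphApply θ l₁ ++ morphApply θ l₂ := by simp [morphApply]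

@[simp] theorem bp_morphApply_singleton (θ : A → List A) (b : A) : morphApply θ [b] = θ b := by
  simp [morphApply]

@[simp] theorem bp_morphIter_nil (k : ℕ) : morphIter σ k ([] : List A) = [] := by
  induction k with
  | zero => rfl
  | succ k ih => simp [morphIter, ih]

theorem bp_morphIter_append (k : ℕ) (l₁ l₂ : List A) :
    morphIter σ k (l₁ ++ l₂) = morphIter σ k l₁ ++ morphIter σ k l₂ := by
  induction k with
  | zero => rfl
  | succ k ih => simp [morphIter, ih, bp_morphApply_append]

theorem bp_morphIter_add (m k : ℕ) (l : List A) :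
    morphIter σ (m + k) l = morphIter σ k (morphIter σ m l) := by
  induction k with
  | zero => rfl
  | succ k ih =>
    have h1 : m + (k + 1) = (m + k) + 1 := by omega
    rw [h1]
    show morphApply σ (morphIter σ (m + k) l) = _
    rw [ih]
    rfl

theorem bp_morphIter_sing (k : ℕ) (l : List A) :
    morphIter σ k l = morphApply (fun b => morphIter σ k [b]) l := by
  induction l with
  | nil => simp
  | cons b l ih =>
    have h1 : (b :: l) = [b] ++ l := rfl
    rw [h1, bp_morphIter_append, bp_morphApply_append, ih, bp_morphApply_singleton]

end PartB

section PartD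
variable {A : Type*} [Fintype A] [Nonempty A] (σ : A → List A)

theorem bp_le_maxLen (k : ℕ) (b : A) : (morphIter σ k [b]).length ≤ maxLen σ k := by
  unfold maxLen
  exact Finset.le_sup' (fun a : A => (morphIter σ k [a]).length) (Finset.mem_univ b)

theorem bp_minLen_le (k : ℕ) (b : A) : minLen σ k ≤ (morphIter σ k [b]).length := by
  unfold minLen
  exact Finset.inf'_le (fun a : A => (morphIter σ k [a]).length) (Finset.mem_univ b)

theorem bp_maxLen_zero : maxLen σ 0 = 1 := by
  unfold maxLen
  have : ∀ a : A, (morphIter σ 0 [a]).length = 1 := fun a => rfl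
  simp only [this]
  exact Finset.sup'_const _ _

theorem bp_minLen_zero : minLen σ 0 = 1 := by
  unfold minLen
  have : ∀ a : A, (morphIter σ 0 [a]).length = 1 := fun a => rfl
  simp only [this]
  exact Finset.inf'_const _ _

theorem bp_sigma_len_le (b : A) : (σ b).length ≤ maxLen σ 1 := by
  have h := bp_le_maxLen σ 1 b
  have h1 : morphIter σ 1 [b] = σ b := by
    show morphApply σ (morphIter σ 0 [b]) = σ b
    show morphApply σ [b] = σ b
    simp
  rwa [h1] at h

theorem bp_morphApply_length_le (l : List A) :
    (morphApply σ l).length ≤ maxLen σ 1 * l.length := by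
  induction l with
  | nil => simp
  | cons b l ih =>
    rw [bp_morphApply_cons, List.length_append, List.length_cons]
    have := bp_sigma_len_le σ b
    calc (σ b).length + (morphApply σ l).length ≤ maxLen σ 1 + maxLen σ 1 * l.length := by omega
      _ = maxLen σ 1 * (l.length + 1) := by ring

theorem bp_maxLen_succ_le (k : ℕ) : maxLen σ (k + 1) ≤ maxLen σ 1 * maxLen σ k := by
  apply Finset.sup'_le
  intro b _
  show (morphApply σ (morphIter σ k [b])).length ≤ _
  calc (morphApply σ (morphIter σ k [b])).length ≤ maxLen σ 1 * (morphIter σ k [b]).length :=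
        bp_morphApply_length_le σ _
    _ ≤ maxLen σ 1 * maxLen σ k := Nat.mul_le_mul_left _ (bp_le_maxLen σ k b)

theorem bp_minLen_unbounded (hgrow : Growing σ) (N : ℕ) : ∃ k, N ≤ minLen σ k := by
  have h : ∀ᶠ k in Filter.atTop, ∀ b : A, N ≤ (morphIter σ k [b]).length := by
    rw [Filter.eventually_all]
    intro b
    exact (hgrow b).eventually_ge_atTop N
  obtain ⟨k, hk⟩ := h.exists
  exact ⟨k, Finset.le_inf' _ _ fun b _ => hk b⟩

end PartD

section PartC
variable {A : Type*}

theorem bp_sigma_prefix (σ : A → List A) (a : A) (y : ℕ → A)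
    (hpre : ∀ n, occursAt y (morphIter σ n [a]) 0)
    (hlen : ∀ m, ∃ N, m ≤ (morphIter σ N [a]).length)
    (k m : ℕ) : occursAt y (morphIter σ k (seqWord y 0 m)) 0 := by
  obtain ⟨N, hN⟩ := hlen m
  have hW := hpre N
  have hpre2 : seqWord y 0 m = (morphIter σ N [a]).take m := by
    have h1 := bp_occursAt_take hW m hN
    unfold occursAt at h1
    rw [← h1]
    congr 1
    rw [List.length_take]
    omega
  have hsplit : morphIter σ N [a] = seqWord y 0 m ++ (morphIter σ N [a]).drop m := by
    rw [hpre2, List.take_append_drop]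
  have h2 : occursAt y (morphIter σ k (morphIter σ N [a])) 0 := by
    rw [← bp_morphIter_add]
    exact hpre (N + k)
  rw [hsplit, bp_morphIter_append] at h2
  exact (bp_occursAt_append h2).1

theorem bp_exists_block (s : ℕ → ℕ) (h0 : s 0 = 0) (hmono : ∀ j, s j + 1 ≤ s (j + 1)) (i : ℕ) :
    ∃ j, s j ≤ i ∧ i < s (j + 1) := by
  have hge : ∀ j, j ≤ s j := by
    intro j
    induction j with
    | zero => omega
    | succ j ih => have := hmono j; omega
  have hP : ∃ j, i < s j := ⟨i + 1, by have := hge (i + 1); omega⟩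
  let j0 := Nat.find hP
  have hj0 : i < s j0 := Nat.find_spec hP
  have hj0pos : j0 ≠ 0 := by
    intro h
    have : i < s 0 := by rw [← h]; exact hj0
    omega
  obtain ⟨j, hj⟩ := Nat.exists_eq_succ_of_ne_zero hj0pos
  have hnot : ¬ i < s j := Nat.find_min hP (by omega)
  exact ⟨j, by omega, by rw [← Nat.succ_eq_add_one, ← hj]; exact hj0⟩

end PartC

section PartE

theorem bp_MH_aux {B : Type*} (x : ℕ → B) (k i j : ℕ) (hij : i < j)
    (heq : seqWord x i k = seqWord x j k)
    (hext : ∀ i' j' : ℕ, seqWord x i' k = seqWord x j' k →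
      seqWord x i' (k + 1) = seqWord x j' (k + 1)) : UltPeriodic x := by
  have hsplit : ∀ t, seqWord x t (k + 1) = seqWord x t 1 ++ seqWord x (t + 1) k := by
    intro t
    have := bp_seqWord_add x t 1 k
    rwa [Nat.add_comm 1 k] at this
  have key : ∀ s, seqWord x (i + s) (k + 1) = seqWord x (j + s) (k + 1) := by
    intro s
    induction s with
    | zero => simpa using hext i j heq
    | succ s ih =>
      have h1 : seqWord x (i + s + 1) k = seqWord x (j + s + 1) k := by
        rw [hsplit (i + s), hsplit (j + s)] at ih
        exact (List.append_inj ih (by simp)).2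
      have h2 := hext _ _ h1
      have e1 : i + (s + 1) = i + s + 1 := by omega
      have e2 : j + (s + 1) = j + s + 1 := by omega
      rw [e1, e2]
      exact h2
  have hletter : ∀ s, x (i + s) = x (j + s) := by
    intro s
    have := bp_seqWord_apply_eq (key s) 0 (by omega)
    simpa using this
  refine ⟨j - i, by omega, i, ?_⟩
  intro t ht
  have h1 : t + (j - i) = j + (t - i) := by omega
  have h2 : t = i + (t - i) := by omega
  rw [h1]
  conv_rhs => rw [h2]
  exact (hletter (t - i)).symm


theorem bp_finite_len {B : Type*} [Fintype B] (l : ℕ) : {w : List B | w.length = l}.Finite := by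
  apply Set.Finite.subset (Set.finite_range (fun f : Fin l → B => List.ofFn f))
  intro w hw
  simp only [Set.mem_setOf_eq] at hw
  refine ⟨fun i => w.get (Fin.cast hw.symm i), ?_⟩
  apply List.ext_getElem (by simp [hw])
  intro k h1 h2
  simp [List.getElem_ofFn]

theorem bp_range_seqWord_finite {B : Type*} [Fintype B] (x : ℕ → B) (l : ℕ) :
    (Set.range (fun i => seqWord x i l)).Finite := by
  apply (bp_finite_len l).subset
  rintro w ⟨i, rfl⟩
  simp

theorem bp_MH {B : Type*} [Fintype B] (x : ℕ → B) (m : ℕ)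
    (h : (Set.range (fun i => seqWord x i m)).ncard ≤ m) : UltPeriodic x := by
  classical
  set F : ℕ → Set (List B) := fun l => Set.range (fun i => seqWord x i l) with hF
  have hFin : ∀ l, (F l).Finite := fun l => bp_range_seqWord_finite x l
  -- find k with no growth
  have hex : ∃ k, (F (k + 1)).ncard ≤ (F k).ncard := by
    by_contra hno
    push_neg at hno
    have hgrow : ∀ k, k + 1 ≤ (F k).ncard := by
      intro k
      induction k with
      | zero =>
        have h1 : F 0 = {([] : List B)} := by
          apply Set.eq_singleton_iff_unique_mem.mpr
          exact ⟨⟨0, by simp⟩, by rintro w ⟨i, rfl⟩; simp⟩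
        rw [h1, Set.ncard_singleton]
      | succ k ih => have := hno k; omega
    have hm : (F m).ncard ≤ m := h
    have := hgrow m
    omega
  obtain ⟨k, hk⟩ := hex
  set S := (hFin k).toFinset with hS
  set T := (hFin (k + 1)).toFinset with hT
  have himg : T.image (List.take k) = S := by
    ext w
    simp only [hT, hS, Finset.mem_image, Set.Finite.mem_toFinset, hF, Set.mem_range]
    constructor
    · rintro ⟨w', ⟨i, rfl⟩, rfl⟩
      refine ⟨i, ?_⟩
      rw [bp_seqWord_take]
      congr 1
      omega
    · rintro ⟨i, rfl⟩
      refine ⟨seqWord x i (k + 1), ⟨i, rfl⟩, ?_⟩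
      rw [bp_seqWord_take]
      congr 1
      omega
  have hcards : (T.image (List.take k)).card = T.card := by
    have h1 : S.card = (F k).ncard := (Set.ncard_eq_toFinset_card _ (hFin k)).symm
    have h2 : T.card = (F (k + 1)).ncard := (Set.ncard_eq_toFinset_card _ (hFin (k + 1))).symm
    have h3 : (T.image (List.take k)).card ≤ T.card := Finset.card_image_le
    rw [himg] at h3 ⊢
    omega
  have hinjOn : Set.InjOn (List.take k) (↑T : Set (List B)) := Finset.injOn_of_card_image_eq hcards
  have hext : ∀ i j : ℕ, seqWord x i k = seqWord x j k →
      seqWord x i (k + 1) = seqWord x j (k + 1) := by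
    intro i j hij
    apply hinjOn
    · simp only [hT, Set.Finite.coe_toFinset]; exact ⟨i, rfl⟩
    · simp only [hT, Set.Finite.coe_toFinset]; exact ⟨j, rfl⟩
    · rw [bp_seqWord_take, bp_seqWord_take]
      have : min k (k + 1) = k := by omega
      rw [this]
      exact hij
  -- pigeonhole
  obtain ⟨i, j, hne, heq⟩ := Finite.exists_ne_map_eq_of_infinite
    (fun i : ℕ => (⟨seqWord x i k, by simp only [hS, Set.Finite.mem_toFinset]; exact ⟨i, rfl⟩⟩ : {w // w ∈ S}))
  have heq2 : seqWord x i k = seqWord x j k := congrArg Subtype.val heq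
  -- wlog i < j
  rcases lt_or_gt_of_ne hne with hij | hij
  case _ =>
    exact bp_MH_aux x k i j hij heq2 hext
  case _ =>
    exact bp_MH_aux x k j i hij heq2.symm hext

end PartE


section PartF
variable {B : Type*} [Fintype B]

/-- Forward syndeticity: from any occurrence of `w`, every interval `[α, α + K|w|]`
with `α` at least the occurrence start contains an occurrence of `w`. -/
theorem bp_synd {x : ℕ → B} {K : ℕ} (hK : LinRec K x) {w : List B} (hw : w ≠ [])
    {i₀ : ℕ} (h0 : occursAt x w i₀) :
    ∀ α, i₀ ≤ α → ∃ jj, α ≤ jj ∧ jj ≤ α + K * w.length ∧ occursAt x w jj := by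
  intro α hα
  induction α with
  | zero => exact ⟨i₀, by omega, by omega, h0⟩
  | succ α ih =>
    by_cases hc : i₀ ≤ α
    · obtain ⟨jj, hj1, hj2, hj3⟩ := ih hc
      by_cases hcc : α + 1 ≤ jj
      · exact ⟨jj, hcc, by omega, hj3⟩
      · obtain ⟨j', hj'1, hj'2, hj'3⟩ := hK.2 w hw ⟨i₀, h0⟩ jj hj3
        exact ⟨j', by omega, by omega, hj'3⟩
    · have : i₀ = α + 1 := by omega
      exact ⟨i₀, by omega, by omega, h0⟩

/-- The gap lemma: if `x` is linearly recurrent with constant `K` and not ultimately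
periodic, then two occurrences of a nonempty word `u` at distance `δ ≥ 1` satisfy
`|u| ≤ K(δ+1)`. -/
theorem bp_gap {x : ℕ → B} {K : ℕ} (hur : UnifRec x) (hK : LinRec K x)
    (hnp : ¬ UltPeriodic x) {u : List B} (hu : u ≠ []) {q δ : ℕ} (hδ : 1 ≤ δ)
    (h1 : occursAt x u q) (h2 : occursAt x u (q + δ)) :
    u.length ≤ K * (δ + 1) := by
  classical
  by_contra hlt
  push_neg at hlt
  set n := u.length with hn
  set m := δ + 1 with hm
  apply hnp
  apply bp_MH x m
  -- periodicity relation at q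
  have hper : ∀ t < n, x (q + t + δ) = x (q + t) := by
    intro t ht
    have e1 : seqWord x q n = seqWord x (q + δ) n := by
      unfold occursAt at h1 h2
      rw [h1, h2]
    have := bp_seqWord_apply_eq e1 t ht
    have e2 : q + δ + t = q + t + δ := by omega
    rw [e2] at this
    exact this.symm
  -- threshold T: all factors of length m occur somewhere ≤ T
  have hFfin : (Set.range (fun i => seqWord x i m)).Finite := bp_range_seqWord_finite x m
  set g : List B → ℕ := fun w => if h : ∃ i, occursAt x w i then h.choose else 0 with hg
  set T := (hFfin.toFinset).sup g with hT
  have hTspec : ∀ w ∈ Set.range (fun i => seqWord x i m), ∃ i₀ ≤ T, occursAt x w i₀ := by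
    rintro w hwmem
    obtain ⟨i, hi⟩ := id hwmem
    have hocc : ∃ i', occursAt x w i' := ⟨i, by rw [← hi]; exact bp_occursAt_seqWord x i m⟩
    refine ⟨g w, ?_, ?_⟩
    · have : g w ≤ T := Finset.le_sup (by simpa [Set.Finite.mem_toFinset] using hwmem)
      exact this
    · simp only [hg, dif_pos hocc]
      exact hocc.choose_spec
  -- the long periodic word R and an occurrence β ≥ T
  set R := seqWord x q (n + δ) with hR
  obtain ⟨C, hC⟩ := hur R ⟨q, bp_occursAt_seqWord x q (n + δ)⟩
  obtain ⟨β, hβ1, hβ2, hβ3⟩ := hC T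
  -- periodicity at β
  have hβper : ∀ s < n, x (β + s + δ) = x (β + s) := by
    intro s hs
    have e1 : seqWord x β (n + δ) = seqWord x q (n + δ) := by
      have h4 := hβ3
      unfold occursAt at h4
      simp only [hR, bp_seqWord_length] at h4
      exact h4
    have hpt : ∀ s' < n + δ, x (β + s') = x (q + s') := fun s' hs' =>
      bp_seqWord_apply_eq e1 s' hs'
    have e2 : β + s + δ = β + (s + δ) := by omega
    have e3 : q + s + δ = q + (s + δ) := by omega
    rw [e2, hpt (s + δ) (by omega), ← e3, hper s hs, hpt s (by omega)]
  -- offset reduction mod δ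
  have hred : ∀ o, o + m ≤ n + δ → seqWord x (β + o) m = seqWord x (β + o % δ) m := by
    intro o
    induction o using Nat.strong_induction_on with
    | _ o ih =>
      intro ho
      by_cases hco : o < δ
      · rw [Nat.mod_eq_of_lt hco]
      · push_neg at hco
        have h1 : seqWord x (β + o) m = seqWord x (β + (o - δ)) m := by
          apply bp_seqWord_congr
          intro t ht
          have hs : o - δ + t < n := by omega
          have := hβper (o - δ + t) hs
          have e1 : β + (o - δ + t) + δ = β + o + t := by omega
          have e2 : β + (o - δ + t) = β + (o - δ) + t := by omega
          rw [e1, e2] at this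
          exact this
        have h2 : o % δ = (o - δ) % δ := Nat.mod_eq_sub_mod hco
        rw [h1, h2]
        exact ih (o - δ) (by omega) (by omega)
  -- count factors of length m
  have hsub : Set.range (fun i => seqWord x i m) ⊆
      (fun r => seqWord x (β + r) m) '' (Set.Iio δ) := by
    rintro w ⟨i, rfl⟩
    have hwne : seqWord x i m ≠ [] := by
      intro hc
      have := congrArg List.length hc
      simp [hm] at this
    obtain ⟨i₀, hi₀T, hi₀⟩ := hTspec (seqWord x i m) ⟨i, rfl⟩
    obtain ⟨jj, hjj1, hjj2, hjj3⟩ := bp_synd hK hwne hi₀ β (le_trans hi₀T hβ1)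
    have hjlen : (seqWord x i m).length = m := by simp
    rw [hjlen] at hjj2
    set o := jj - β with ho
    have hofit : o + m ≤ n + δ := by
      have h5 : K * m < n := hlt
      omega
    have hw2 : seqWord x i m = seqWord x (β + o) m := by
      unfold occursAt at hjj3
      rw [hjlen] at hjj3
      rw [← hjj3]
      congr 1
      omega
    refine ⟨o % δ, Nat.mod_lt _ (by omega), ?_⟩
    show seqWord x (β + o % δ) m = seqWord x i m
    rw [← hred o hofit, ← hw2]
  calc (Set.range (fun i => seqWord x i m)).ncard
      ≤ ((fun r => seqWord x (β + r) m) '' (Set.Iio δ)).ncard := by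
        exact Set.ncard_le_ncard hsub ((Set.finite_Iio δ).image _)
    _ ≤ (Set.Iio δ).ncard := Set.ncard_image_le (Set.finite_Iio δ)
    _ = δ := by
        rw [← Finset.coe_range, Set.ncard_coe_finset, Finset.card_range]
    _ ≤ m := by omega

end PartF


theorem bp_seqWord_decomp {A : Type*} (y : ℕ → A) (i l L : ℕ) (h : i + l ≤ L) :
    seqWord y 0 L = (seqWord y 0 i ++ seqWord y i l) ++ seqWord y (i + l) (L - i - l) := by
  have h1 : seqWord y 0 L = seqWord y 0 (i + l) ++ seqWord y (i + l) (L - (i + l)) := by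
    have h2 := bp_seqWord_add y 0 (i + l) (L - (i + l))
    rw [Nat.add_sub_cancel' h] at h2
    simpa using h2
  have h3 : seqWord y 0 (i + l) = seqWord y 0 i ++ seqWord y i l := by
    have h4 := bp_seqWord_add y 0 i l
    simpa using h4
  rw [h1, h3]
  congr 1
  congr 1
  omega

/-- Proposition: let `σ` be a substitution prolongable on `a`, `φ` a coding,
`y = σ^∞(a)`, and suppose `x = φ(y)` is uniformly recurrent and non-periodic with all
letters of `A` occurring in `y`. Then for every factor `u` of `x`, the number of factors
`v` of `y` with `φ(v) = u` is at most `p_σ(K+1)·|σ|·Q_σ·(K+1)²`, where `K` is a linear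
recurrence constant of `x`, `p_σ(n)` is the number of length-`n` words of the language of
`σ`, and `Q_σ` satisfies `|σ^k| ≤ Q_σ·⟨σ^k⟩` for all `k`. -/
theorem bounded_preimages {A B : Type*} [Fintype A] [Fintype B] [Nonempty A]
    (σ : A → List A) (a : A)
    (hgrow : Growing σ) (hprol : Prolongable σ a)
    (y : ℕ → A) (hy : IsFixedPointOf σ a y)
    (φ : A → B) (x : ℕ → B) (hx : x = fun n => φ (y n))
    (hur : UnifRec x) (hnp : ¬ UltPeriodic x)
    (hall : ∀ b : A, ∃ n, y n = b)
    (K : ℕ) (hK : LinRec K x)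
    (Q : ℕ) (hQ : ∀ k, maxLen σ k ≤ Q * minLen σ k) :
    ∀ u : List B, IsFactor x u →
      {v : List A | IsFactor y v ∧ v.map φ = u}.ncard ≤
        {w : List A | w.length = K + 1 ∧ InLang σ w}.ncard *
          maxLen σ 1 * Q * (K + 1) ^ 2 := by
  classical
  subst hx
  intro u hu
  set n := u.length with hn
  set S := {v : List A | IsFactor y v ∧ v.map φ = u} with hS
  set Wset := {w : List A | w.length = K + 1 ∧ InLang σ w} with hWs
  -- basic facts
  have hlenN : ∀ m : ℕ, ∃ N, m ≤ (morphIter σ N [a]).length := fun m =>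
    ((hprol.2).eventually_ge_atTop m).exists
  have hypre : ∀ N, occursAt y (morphIter σ N [a]) 0 := hy.2
  have hfac_lang : ∀ v : List A, IsFactor y v → InLang σ v := by
    rintro v ⟨i, hvi⟩
    obtain ⟨N, hN⟩ := hlenN (i + v.length)
    refine ⟨a, N, ?_⟩
    have hW := hypre N
    have h1 : morphIter σ N [a] = seqWord y 0 (morphIter σ N [a]).length := hW.symm
    have hdec := bp_seqWord_decomp y i v.length (morphIter σ N [a]).length hN
    refine ⟨seqWord y 0 i,
      seqWord y (i + v.length) ((morphIter σ N [a]).length - i - v.length), ?_⟩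
    rw [hvi] at hdec
    rw [← hdec]
    exact h1.symm
  have hK1 : 1 ≤ K := by
    have h0 : occursAt (fun t => φ (y t)) [φ (y 0)] 0 := by
      show seqWord (fun t => φ (y t)) 0 ([φ (y 0)].length) = [φ (y 0)]
      simp only [List.length_singleton]
      exact bp_seqWord_one _ 0
    obtain ⟨j, hj1, hj2, -⟩ := hK.2 [φ (y 0)] (by simp) ⟨0, h0⟩ 0 h0
    simp only [List.length_singleton, Nat.mul_one, Nat.zero_add] at hj2
    omega
  have hQ1 : 1 ≤ Q := by
    have h1 := hQ 0
    rw [bp_maxLen_zero, bp_minLen_zero] at h1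
    omega
  have hM1 : 1 ≤ maxLen σ 1 := by
    obtain ⟨t, hat, -⟩ := hprol.1
    have h1 := bp_sigma_len_le σ a
    rw [hat] at h1
    simp only [List.length_cons] at h1
    omega
  have hWfin : Wset.Finite := by
    apply (bp_finite_len (K + 1)).subset
    intro w hw
    rw [hWs] at hw
    exact hw.1
  haveI := hWfin.to_subtype
  have hmem : ∀ v : ↥S, IsFactor y (v : List A) ∧ (v : List A).map φ = u := by
    intro v
    exact v.2
  have hvlen : ∀ v : ↥S, (v : List A).length = n := by
    intro v
    have h := congrArg List.length (hmem v).2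
    simpa [hn] using h
  rcases le_or_gt n (K + 1) with hsmall | hbig
  · -- small case: inject into Wset
    have hfun : ∀ v : ↥S, ∃ w, w ∈ Wset ∧ w.take n = (v : List A) := by
      intro v
      obtain ⟨i, hi⟩ := (hmem v).1
      refine ⟨seqWord y i (K + 1), ?_, ?_⟩
      · rw [hWs]
        exact ⟨by simp, hfac_lang _ ⟨i, bp_occursAt_seqWord y i (K + 1)⟩⟩
      · rw [bp_seqWord_take]
        have h1 : min n (K + 1) = n := by omega
        rw [h1, ← hvlen v]
        exact hi
    choose f hf1 hf2 using hfun
    have hinj : Function.Injective (fun v : ↥S => (⟨f v, hf1 v⟩ : ↥Wset)) := by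
      intro v v' hvv
      have h1 : f v = f v' := congrArg Subtype.val hvv
      apply Subtype.ext
      rw [← hf2 v, ← hf2 v', h1]
    have h1 : S.ncard ≤ Wset.ncard := by
      rw [← Nat.card_coe_set_eq, ← Nat.card_coe_set_eq]
      exact Nat.card_le_card_of_injective _ hinj
    have h2 : 1 ≤ (K + 1) ^ 2 := by
      have h3 : 0 < (K + 1) ^ 2 := by positivity
      omega
    calc S.ncard ≤ Wset.ncard := h1
      _ = Wset.ncard * 1 * 1 * 1 := by ring
      _ ≤ Wset.ncard * maxLen σ 1 * Q * (K + 1) ^ 2 := by gcongr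
  · -- big case
    have hnK : K + 2 ≤ n := hbig
    have hune : u ≠ [] := by
      intro hc
      rw [hc] at hn
      simp at hn
      omega
    obtain ⟨kk, hkk⟩ := bp_minLen_unbounded σ hgrow n
    have hex : ∃ k, n ≤ minLen σ k := ⟨kk, hkk⟩
    set k := Nat.find hex with hkdef
    have hk : n ≤ minLen σ k := Nat.find_spec hex
    have hkpos : k ≠ 0 := by
      intro h0
      have h1 := hk
      rw [h0, bp_minLen_zero] at h1
      omega
    have hprevlt : minLen σ (k - 1) < n := by
      by_contra hc
      push_neg at hc
      exact Nat.find_min hex (show k - 1 < k by omega) hc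
    have hmaxk : maxLen σ k ≤ maxLen σ 1 * (Q * (n - 1)) := by
      have h1 : maxLen σ k ≤ maxLen σ 1 * maxLen σ (k - 1) := by
        have h2 := bp_maxLen_succ_le σ (k - 1)
        rw [show k - 1 + 1 = k by omega] at h2
        exact h2
      calc maxLen σ k ≤ maxLen σ 1 * maxLen σ (k - 1) := h1
        _ ≤ maxLen σ 1 * (Q * minLen σ (k - 1)) := Nat.mul_le_mul_left _ (hQ _)
        _ ≤ maxLen σ 1 * (Q * (n - 1)) :=
            Nat.mul_le_mul_left _ (Nat.mul_le_mul_left _ (by omega))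
    set τ : A → List A := fun b => morphIter σ k [b] with hτ
    set s : ℕ → ℕ := fun j => (morphIter σ k (seqWord y 0 j)).length with hsdef
    have hs0 : s 0 = 0 := by simp [hsdef]
    have hstep : ∀ j, s (j + 1) = s j + (τ (y j)).length := by
      intro j
      have h1 : seqWord y 0 (j + 1) = seqWord y 0 j ++ seqWord y j 1 := by
        have h2 := bp_seqWord_add y 0 j 1
        simpa using h2
      have h2 : seqWord y j 1 = [y j] := bp_seqWord_one y j
      simp only [hsdef, hτ, h1, h2, bp_morphIter_append, List.length_append]
    have hblocklo : ∀ j, n ≤ (τ (y j)).length := fun j => le_trans hk (bp_minLen_le σ k (y j))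
    have hblockhi : ∀ j, (τ (y j)).length ≤ maxLen σ k := fun j => bp_le_maxLen σ k (y j)
    have hmono : ∀ j, s j + 1 ≤ s (j + 1) := by
      intro j
      have h1 := hblocklo j
      rw [hstep j]
      omega
    have hsmono : Monotone s := by
      apply monotone_nat_of_le_succ
      intro j
      have := hmono j
      omega
    have hocc2 : ∀ j t, occursAt y (morphIter σ k (seqWord y j t)) (s j) := by
      intro j t
      have h1 := bp_sigma_prefix σ a y hypre hlenN k (j + t)
      have h2 : seqWord y 0 (j + t) = seqWord y 0 j ++ seqWord y j t := by
        have := bp_seqWord_add y 0 j t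
        simpa using this
      rw [h2, bp_morphIter_append] at h1
      have h3 := (bp_occursAt_append h1).2
      simpa [hsdef] using h3
    have hmorphw : ∀ l : List A, morphApply τ l = morphIter σ k l := by
      intro l
      rw [hτ]
      exact (bp_morphIter_sing σ k l).symm
    -- the packaging of each preimage
    have pack : ∀ v : ↥S, ∃ (w : List A) (o : ℕ),
        w ∈ Wset ∧ o < maxLen σ k ∧ o + n ≤ (morphApply τ w).length ∧
        ((morphApply τ w).drop o).take n = (v : List A) ∧
        (∃ p, occursAt y (morphApply τ w) p) := by
      intro v
      obtain ⟨i, hi⟩ := (hmem v).1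
      obtain ⟨j, hj1, hj2⟩ := bp_exists_block s hs0 hmono i
      have hwmem : seqWord y j (K + 1) ∈ Wset := by
        rw [hWs]
        exact ⟨by simp, hfac_lang _ ⟨j, bp_occursAt_seqWord y j (K + 1)⟩⟩
      have happ : morphApply τ (seqWord y j (K + 1)) = morphIter σ k (seqWord y j (K + 1)) :=
        hmorphw _
      have hoccw : occursAt y (morphApply τ (seqWord y j (K + 1))) (s j) := by
        rw [happ]
        exact hocc2 j (K + 1)
      have hlapp : s j + (morphApply τ (seqWord y j (K + 1))).length = s (j + (K + 1)) := by
        have h2 : seqWord y 0 (j + (K + 1)) = seqWord y 0 j ++ seqWord y j (K + 1) := by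
          have := bp_seqWord_add y 0 j (K + 1)
          simpa using this
        have h3 : s (j + (K + 1)) = s j + (morphIter σ k (seqWord y j (K + 1))).length := by
          simp only [hsdef, h2, bp_morphIter_append, List.length_append]
        rw [happ]
        omega
      have hs2 : s j + (τ (y j)).length + (τ (y (j + 1))).length = s (j + 2) := by
        have e1 := hstep j
        have e2 := hstep (j + 1)
        rw [show j + 1 + 1 = j + 2 by omega] at e2
        omega
      have hs_le : s (j + 2) ≤ s (j + (K + 1)) := hsmono (by omega)
      have holt : i - s j < (τ (y j)).length := by
        have := hstep j
        omega
      have hofit : (i - s j) + n ≤ (morphApply τ (seqWord y j (K + 1))).length := by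
        have h4 := hblocklo (j + 1)
        omega
      refine ⟨seqWord y j (K + 1), i - s j, hwmem, lt_of_lt_of_le holt (hblockhi j),
        hofit, ?_, ⟨s j, hoccw⟩⟩
      have h5 := bp_occursAt_sub hoccw (i - s j) n hofit
      have h6 : s j + (i - s j) = i := by omega
      rw [h6] at h5
      have h7 : ((((morphApply τ (seqWord y j (K + 1)))).drop (i - s j)).take n).length = n := by
        rw [List.length_take, List.length_drop]
        omega
      show (((morphApply τ (seqWord y j (K + 1)))).drop (i - s j)).take n = (v : List A)
      have h8 : occursAt y (v : List A) i := hi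
      unfold occursAt at h5 h8
      rw [h7] at h5
      rw [hvlen v] at h8
      rw [← h5, ← h8]
    choose Wf Of hWf hOlt hOfit hOtake hOocc using pack
    -- gap property
    have hgapS : ∀ v v' : ↥S, Wf v = Wf v' → Of v < Of v' → n - K ≤ K * (Of v' - Of v) := by
      intro v v' hww hoo
      obtain ⟨p, hp⟩ := hOocc v'
      have hv1 : occursAt y (v : List A) (p + Of v) := by
        have h8 : Of v + n ≤ (morphApply τ (Wf v')).length := by
          rw [← hww]
          exact hOfit v
        have h9 := bp_occursAt_sub hp (Of v) n h8
        rw [← hww] at h9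
        rw [hOtake v] at h9
        exact h9
      have hv2 : occursAt y (v' : List A) (p + Of v') := by
        have h9 := bp_occursAt_sub hp (Of v') n (hOfit v')
        rw [hOtake v'] at h9
        exact h9
      have hx1 : occursAt (fun t => φ (y t)) u (p + Of v) := by
        have h10 := bp_occursAt_map hv1 φ
        rwa [(hmem v).2] at h10
      have hx2 : occursAt (fun t => φ (y t)) u ((p + Of v) + (Of v' - Of v)) := by
        have h10 := bp_occursAt_map hv2 φ
        rw [(hmem v').2] at h10
        have e1 : p + Of v' = (p + Of v) + (Of v' - Of v) := by omega
        rwa [e1] at h10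
      have hKgap := bp_gap hur hK hnp hune (show 1 ≤ Of v' - Of v by omega) hx1 hx2
      rw [Nat.mul_add, Nat.mul_one] at hKgap
      omega
    set Ow : List A → Set ℕ := fun w => {o | ∃ v : ↥S, Wf v = w ∧ Of v = o} with hOwdef
    have hOwfin : ∀ w, (Ow w).Finite := by
      intro w
      apply (Set.finite_Iio (maxLen σ k)).subset
      rintro o ⟨v, hv1, rfl⟩
      exact hOlt v
    set Bd := maxLen σ 1 * Q * (K + 1) ^ 2 with hBd
    have hrank : ∀ w, ∀ o, o ∈ Ow w → (n - K) * ((Ow w ∩ Set.Iio o).ncard) ≤ K * o := by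
      intro w o
      induction o using Nat.strong_induction_on with
      | _ o ih =>
        intro ho
        by_cases hempty : Ow w ∩ Set.Iio o = ∅
        · rw [hempty]
          simp
        · have hfin : (Ow w ∩ Set.Iio o).Finite := (hOwfin w).inter_of_left _
          have hne : (Ow w ∩ Set.Iio o).Nonempty := Set.nonempty_iff_ne_empty.mpr hempty
          have hFne : hfin.toFinset.Nonempty := by
            rw [Set.Finite.toFinset_nonempty]
            exact hne
          set o2 := hfin.toFinset.max' hFne with ho2
          have ho2mem : o2 ∈ Ow w ∩ Set.Iio o := by
            have := hfin.toFinset.max'_mem hFne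
            rwa [Set.Finite.mem_toFinset] at this
          have hmax : ∀ z ∈ Ow w, z < o → z ≤ o2 := by
            intro z hz hzo
            exact hfin.toFinset.le_max' z (by rw [Set.Finite.mem_toFinset]; exact ⟨hz, hzo⟩)
          have hsplit : Ow w ∩ Set.Iio o = insert o2 (Ow w ∩ Set.Iio o2) := by
            ext z
            simp only [Set.mem_inter_iff, Set.mem_Iio, Set.mem_insert_iff]
            constructor
            · rintro ⟨hz1, hz2⟩
              by_cases hz3 : z = o2
              · exact Or.inl hz3
              · exact Or.inr ⟨hz1, lt_of_le_of_ne (hmax z hz1 hz2) hz3⟩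
            · rintro (rfl | ⟨hz1, hz2⟩)
              · exact ⟨ho2mem.1, ho2mem.2⟩
              · exact ⟨hz1, lt_trans hz2 ho2mem.2⟩
          have hcard : (Ow w ∩ Set.Iio o).ncard = (Ow w ∩ Set.Iio o2).ncard + 1 := by
            rw [hsplit, Set.ncard_insert_of_notMem (by simp) ((hOwfin w).inter_of_left _)]
          obtain ⟨v2, hv2w, hv2o⟩ := ho2mem.1
          obtain ⟨v1, hv1w, hv1o⟩ := ho
          have hgap2 : n - K ≤ K * (o - o2) := by
            have h11 := hgapS v2 v1 (by rw [hv2w, hv1w]) (by rw [hv2o, hv1o]; exact ho2mem.2)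
            rwa [hv2o, hv1o] at h11
          have ho2lt : o2 < o := ho2mem.2
          have hih := ih o2 ho2mem.2 ho2mem.1
          rw [hcard, Nat.mul_add, Nat.mul_one]
          have hKo : K * o2 + K * (o - o2) = K * o := by
            rw [← Nat.mul_add]
            congr 1
            omega
          omega
    have hrkBd : ∀ v : ↥S, (Ow (Wf v) ∩ Set.Iio (Of v)).ncard < Bd := by
      intro v
      have h1 := hrank (Wf v) (Of v) ⟨v, rfl, rfl⟩
      have h2 : Of v < maxLen σ 1 * (Q * (n - 1)) := lt_of_lt_of_le (hOlt v) hmaxk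
      have h3 : K * Of v < K * (maxLen σ 1 * (Q * (n - 1))) :=
        mul_lt_mul_of_pos_left h2 (by omega)
      have key : K * (n - 1) < (K + 1) ^ 2 * (n - K) := by
        set E := n - K - 2 with hE
        have e2 : n - 1 = K + 1 + E := by omega
        have e3 : n - K = E + 2 := by omega
        rw [e2, e3]
        have h5 : E ≤ (K + 1) * E := Nat.le_mul_of_pos_left E (by omega)
        have h6 : (K + 1) * (E + 2) = (K + 1) * E + (K + 1) * 2 := by ring
        have h7 : K + 1 + E < (K + 1) * (E + 2) := by omega
        have h8 : K * (K + 1 + E) ≤ (K + 1) * (K + 1 + E) := Nat.mul_le_mul_right _ (by omega)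
        have h9 : (K + 1) * (K + 1 + E) < (K + 1) * ((K + 1) * (E + 2)) :=
          mul_lt_mul_of_pos_left h7 (by omega)
        have h10 : (K + 1) * ((K + 1) * (E + 2)) = (K + 1) ^ 2 * (E + 2) := by ring
        omega
      have hMQpos : 0 < maxLen σ 1 * Q := Nat.mul_pos (by omega) (by omega)
      have h4 : (n - K) * ((Ow (Wf v) ∩ Set.Iio (Of v)).ncard) < (n - K) * Bd := by
        calc (n - K) * ((Ow (Wf v) ∩ Set.Iio (Of v)).ncard) ≤ K * Of v := h1
          _ < K * (maxLen σ 1 * (Q * (n - 1))) := h3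
          _ = (maxLen σ 1 * Q) * (K * (n - 1)) := by ring
          _ < (maxLen σ 1 * Q) * ((K + 1) ^ 2 * (n - K)) := mul_lt_mul_of_pos_left key hMQpos
          _ = (n - K) * Bd := by rw [hBd]; ring
      exact Nat.lt_of_mul_lt_mul_left h4
    have hinj : Function.Injective (fun v : ↥S =>
        ((⟨Wf v, hWf v⟩ : ↥Wset), (⟨(Ow (Wf v) ∩ Set.Iio (Of v)).ncard, hrkBd v⟩ : Fin Bd))) := by
      intro v v' hvv
      have h1 : Wf v = Wf v' := congrArg (fun z : ↥Wset × Fin Bd => (z.1 : List A)) hvv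
      have h2 : (Ow (Wf v) ∩ Set.Iio (Of v)).ncard = (Ow (Wf v') ∩ Set.Iio (Of v')).ncard :=
        congrArg (fun z : ↥Wset × Fin Bd => (z.2 : Fin Bd).val) hvv
      have hstrict : ∀ a b : ↥S, Wf a = Wf b → Of a < Of b →
          (Ow (Wf a) ∩ Set.Iio (Of a)).ncard < (Ow (Wf b) ∩ Set.Iio (Of b)).ncard := by
        intro a' b' hab hab2
        rw [hab]
        apply Set.ncard_lt_ncard ?_ ((hOwfin _).inter_of_left _)
        constructor
        · intro z hz
          exact ⟨hz.1, lt_trans hz.2 hab2⟩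
        · intro hsub2
          have h12 : Of a' ∈ Ow (Wf b') ∩ Set.Iio (Of b') := ⟨⟨a', hab, rfl⟩, hab2⟩
          have h13 := hsub2 h12
          exact absurd (show Of a' < Of a' from h13.2) (lt_irrefl _)
      have hOeq : Of v = Of v' := by
        rcases lt_trichotomy (Of v) (Of v') with hlt2 | heq2 | hlt2
        · have := hstrict v v' h1 hlt2
          omega
        · exact heq2
        · have := hstrict v' v h1.symm hlt2
          omega
      apply Subtype.ext
      rw [← hOtake v, ← hOtake v', h1, hOeq]
    have hfinal : S.ncard ≤ Wset.ncard * Bd := by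
      have hcard := Nat.card_le_card_of_injective _ hinj
      rw [Nat.card_prod] at hcard
      have hfc : Nat.card (Fin Bd) = Bd := by simp
      rw [hfc] at hcard
      simp only [Nat.card_coe_set_eq] at hcard
      exact hcard
    calc S.ncard ≤ Wset.ncard * Bd := hfinal
      _ = Wset.ncard * maxLen σ 1 * Q * (K + 1) ^ 2 := by rw [hBd]; ring
end
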